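/- arXiv:1603.02473 — 2 statements merged into one kernel-verified Lean document; each statement's English description precedes it below -/
import Mathlib

section
/- Let q be an odd prime and p a prime with p ≡ 3 (mod 4) and p ≡ 1 (mod q). Then the middle product Π_{(q+1)/2} = ∏_{j=((q-1)/2)(p-1)/q+1}^{((q+1)/2)(p-1)/q} j is a quadratic non-residue modulo p. -/
theorem stmt7 (p q : ℕ) (hp : p.Prime) (hq : q.Prime) (hqodd : Odd q)
    (hp4 : p % 4 = 3) (hpq : p % q = 1) :
    ¬ IsSquare ((∏ j ∈
        Finset.Ioc (((q - 1) / 2) * (p - 1) / q) (((q + 1) / 2) * (p - 1) / q), j : ℕ)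
      : ZMod p) := by
  haveI := Fact.mk hp
  obtain ⟨s, hs⟩ := hqodd
  have hn : p = q * (p / q) + 1 := by
    conv_lhs => rw [← Nat.div_add_mod p q]
    rw [hpq]
  set n := p / q with hndef
  have ha : (q - 1) / 2 * (p - 1) / q = s * n := by
    have h1 : (q - 1) / 2 = s := by omega
    have h2 : p - 1 = q * n := by omega
    rw [h1, h2, show s * (q * n) = (s * n) * q by ring, Nat.mul_div_cancel _ hq.pos]
  have hb : (q + 1) / 2 * (p - 1) / q = s * n + n := by
    have h1 : (q + 1) / 2 = s + 1 := by omega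
    have h2 : p - 1 = q * n := by omega
    rw [h1, h2, show (s + 1) * (q * n) = (s * n + n) * q by ring,
      Nat.mul_div_cancel _ hq.pos]
  have hevn : Even n := by
    have h2 : p - 1 = q * n := by omega
    have hqn : Even (q * n) := Nat.even_iff.mpr (by omega)
    exact (Nat.even_mul.mp hqn).resolve_left (by rw [Nat.even_iff]; omega)
  obtain ⟨u, hu⟩ := hevn
  have hou : Odd u := by
    have h : p = 2 * (q * u) + 1 := by rw [hn, hu]; ring
    have h2 : (q * u) % 2 = 1 := by omega
    exact (Nat.odd_mul.mp (Nat.odd_iff.mpr h2)).2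
  have hPA : p = 2 * (s * n) + n + 1 := by rw [hn, hs]; ring
  rw [ha, hb]
  set A := s * n with hAdef
  clear_value A
  clear hAdef ha hb hs hn hndef
  push_cast
  -- split the product
  have h1 : A ≤ A + u := by omega
  have h2 : A + u ≤ A + n := by omega
  rw [← Finset.prod_Ioc_consecutive (fun j : ℕ => (j : ZMod p)) h1 h2]
  have hrefl : (∏ j ∈ Finset.Ioc (A + u) (A + n), (j : ZMod p)) =
      ∏ j ∈ Finset.Ioc A (A + u), (-(j : ZMod p)) := by
    rw [← Finset.prod_nbij' (i := fun j => p - j) (j := fun j => p - j)]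
    · intro a ha
      simp only [Finset.mem_Ioc] at ha ⊢
      omega
    · intro a ha
      simp only [Finset.mem_Ioc] at ha ⊢
      omega
    · intro a ha
      simp only [Finset.mem_Ioc] at ha
      omega
    · intro a ha
      simp only [Finset.mem_Ioc] at ha
      omega
    · intro a ha
      simp only [Finset.mem_Ioc] at ha
      have hap : a ≤ p := by omega
      rw [Nat.cast_sub hap, ZMod.natCast_self]
      ring
  rw [hrefl, ← Finset.prod_mul_distrib]
  have hprod : (∏ j ∈ Finset.Ioc A (A + u), ((j : ZMod p) * -(j : ZMod p))) =
      (-1) ^ u * (∏ j ∈ Finset.Ioc A (A + u), (j : ZMod p)) ^ 2 := by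
    have : ∀ j ∈ Finset.Ioc A (A + u), ((j : ZMod p) * -(j : ZMod p)) =
        (-1) * (j : ZMod p) ^ 2 := by intro j _; ring
    rw [Finset.prod_congr rfl this, Finset.prod_mul_distrib, Finset.prod_const,
      Nat.card_Ioc, Finset.prod_pow]
    congr 2
    omega
  rw [hprod, hou.neg_one_pow]
  set c := ∏ j ∈ Finset.Ioc A (A + u), (j : ZMod p) with hc
  have hc0 : c ≠ 0 := by
    rw [hc, Finset.prod_ne_zero_iff]
    intro j hj
    simp only [Finset.mem_Ioc] at hj
    have : ¬ (p ∣ j) := Nat.not_dvd_of_pos_of_lt (by omega) (by omega)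
    simpa [ZMod.natCast_eq_zero_iff] using this
  rintro ⟨d, hd⟩
  have hsq : IsSquare (-1 : ZMod p) := by
    refine ⟨d * c⁻¹, ?_⟩
    have h2 : c ^ 2 ≠ 0 := pow_ne_zero 2 hc0
    have h3 : d * c⁻¹ * (d * c⁻¹) = d * d * (c ^ 2)⁻¹ := by
      rw [sq, mul_inv]; ring
    rw [h3, ← hd, mul_assoc, mul_inv_cancel₀ h2, mul_one]
  rw [ZMod.exists_sq_eq_neg_one_iff] at hsq
  exact hsq hp4
end

section
/- Let q > 3 be an odd prime and p a prime with p ≡ 3 (mod q). For 1 ≤ k ≤ (q-1)/2, the number of integers in {⌊(k-1)p/q⌋+1,...,⌊kp/q⌋} equals (p-3)/q except when k = (q + 2 + ((q/3) - 1)/2)/3, in which case it equals (p-3)/q + 1, where (q/3) is the Legendre symbol of q mod 3. -/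
theorem stmt18 (p q : ℕ) [Fact q.Prime] (hp : p.Prime) (hq3 : 3 < q)
    (hpq : p % q = 3) :
    ∀ k, 1 ≤ k → k ≤ (q - 1) / 2 →
      ((k : ℤ) ≠ ((q : ℤ) + 2 + (legendreSym 3 q - 1) / 2) / 3 →
        (Finset.Ioc ((k - 1) * p / q) (k * p / q)).card = (p - 3) / q) ∧
      ((k : ℤ) = ((q : ℤ) + 2 + (legendreSym 3 q - 1) / 2) / 3 →
        (Finset.Ioc ((k - 1) * p / q) (k * p / q)).card = (p - 3) / q + 1) := by
  have hq : q.Prime := Fact.out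
  have hq0 : 0 < q := by omega
  obtain ⟨m, hpm⟩ : ∃ m, p = q * m + 3 := by
    refine ⟨p / q, ?_⟩
    rw [← hpq]; exact (Nat.div_add_mod p q).symm
  have hm3 : (p - 3) / q = m := by
    rw [show p - 3 = q * m by omega, Nat.mul_div_cancel_left _ hq0]
  have hq3' : q % 3 = 1 ∨ q % 3 = 2 := by
    have h3 : ¬ (3 ∣ q) := by
      intro h
      rcases (hq.eq_one_or_self_of_dvd 3 h) with h' | h' <;> omega
    omega
  have hdiv : ∀ k : ℕ, k * p / q = k * m + 3 * k / q := by
    intro k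
    rw [show k * p = q * (k * m) + 3 * k by rw [hpm]; ring, Nat.mul_add_div hq0]
  have hcard : ∀ k : ℕ, 1 ≤ k →
      (Finset.Ioc ((k - 1) * p / q) (k * p / q)).card
        = m + 3 * k / q - 3 * (k - 1) / q := by
    intro k hk
    rw [Nat.card_Ioc, hdiv k, hdiv (k - 1)]
    have h1 : 3 * (k - 1) / q ≤ 3 * k / q :=
      Nat.div_le_div_right (by omega)
    have hmul : k * m = (k - 1) * m + m := by
      cases' k with k
      · omega
      · simp [Nat.succ_sub_one, Nat.succ_mul]
    omega
  have hdz : ∀ a : ℕ, 3 * a < q → 3 * a / q = 0 := fun a h => Nat.div_eq_of_lt h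
  have hdo : ∀ a : ℕ, q < 3 * a → 3 * a < 2 * q → 3 * a / q = 1 := by
    intro a h1 h2
    exact Nat.div_eq_of_lt_le (by omega) (by omega)
  intro k hk1 hk2
  have h2k : k * 2 ≤ q - 1 := (Nat.le_div_iff_mul_le (by norm_num)).mp hk2
  rcases hq3' with hq1 | hq2
  · -- q ≡ 1 mod 3
    have hleg : legendreSym 3 (q : ℤ) = 1 := by
      have h1 : (q : ℤ) % 3 = 1 := by omega
      have := legendreSym.mod 3 (q : ℤ)
      rw [this, show ((3:ℕ):ℤ) = 3 from rfl, h1]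
      decide
    rw [hleg]
    obtain ⟨t, ht⟩ : ∃ t, q = 3 * t + 1 := ⟨q / 3, by omega⟩
    have hexpr : ((q : ℤ) + 2 + (1 - 1) / 2) / 3 = (t : ℤ) + 1 := by
      have : (q : ℤ) = 3 * t + 1 := by exact_mod_cast congrArg (Nat.cast : ℕ → ℤ) ht
      omega
    rw [hexpr]
    constructor
    · intro hne
      have hkt : k ≠ t + 1 := by
        intro h; apply hne; rw [h]; push_cast; ring
      rw [hcard k hk1, hm3]
      rcases Nat.lt_or_ge k (t + 1) with h | h
      · rw [hdz k (by omega), hdz (k - 1) (by omega)]; omega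
      · have hk2' : k ≥ t + 2 := by omega
        rw [hdo k (by omega) (by omega), hdo (k - 1) (by omega) (by omega)]; omega
    · intro heq
      have hkt : k = t + 1 := by exact_mod_cast heq
      rw [hcard k hk1, hm3, hkt, hdz (t + 1 - 1) (by omega),
        hdo (t + 1) (by omega) (by omega)]
      omega
  · -- q ≡ 2 mod 3
    have hleg : legendreSym 3 (q : ℤ) = -1 := by
      have h1 : (q : ℤ) % 3 = 2 := by omega
      have := legendreSym.mod 3 (q : ℤ)
      rw [this, show ((3:ℕ):ℤ) = 3 from rfl, h1]
      decide
    rw [hleg]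
    obtain ⟨t, ht⟩ : ∃ t, q = 3 * t + 2 := ⟨q / 3, by omega⟩
    have hexpr : ((q : ℤ) + 2 + (-1 - 1) / 2) / 3 = (t : ℤ) + 1 := by
      have : (q : ℤ) = 3 * t + 2 := by exact_mod_cast congrArg (Nat.cast : ℕ → ℤ) ht
      omega
    rw [hexpr]
    constructor
    · intro hne
      have hkt : k ≠ t + 1 := by
        intro h; apply hne; rw [h]; push_cast; ring
      rw [hcard k hk1, hm3]
      rcases Nat.lt_or_ge k (t + 1) with h | h
      · rw [hdz k (by omega), hdz (k - 1) (by omega)]; omega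
      · have hk2' : k ≥ t + 2 := by omega
        rw [hdo k (by omega) (by omega), hdo (k - 1) (by omega) (by omega)]; omega
    · intro heq
      have hkt : k = t + 1 := by exact_mod_cast heq
      rw [hcard k hk1, hm3, hkt, hdz (t + 1 - 1) (by omega),
        hdo (t + 1) (by omega) (by omega)]
      omega
end
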